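/- If X ⊆ 2^ω is an R set, then for every Borel function x ↦ f^x from 2^ω to ω^ω there exists g ∈ ω^ω such that for all x ∈ X there are infinitely many n with f^x(n) = g(n). -/

import Mathlib

open Classical

/-- Decode an element of Cantor space into an element of Baire space:
`decY y n` is the least `k` with `y (Nat.pair n k) = true` (or `0` if none). -/
noncomputable def decY (y : ℕ → Bool) (n : ℕ) : ℕ :=
  if h : ∃ k, y (Nat.pair n k) = true then Nat.find h else 0

lemma dec_eq_iff (y : ℕ → Bool) (n m : ℕ) :
    decY y n = m ↔
      (y (Nat.pair n m) = true ∧ ∀ k < m, y (Nat.pair n k) = false) ∨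
      (m = 0 ∧ ∀ k, y (Nat.pair n k) = false) := by
  unfold decY
  by_cases h : ∃ k, y (Nat.pair n k) = true
  · rw [dif_pos h]
    constructor
    · intro hm
      left
      subst hm
      refine ⟨Nat.find_spec h, fun k hk => ?_⟩
      have := Nat.find_min h hk
      simpa using this
    · rintro (⟨h1, h2⟩ | ⟨h1, h2⟩)
      · exact (Nat.find_eq_iff h).mpr ⟨h1, fun k hk => by simp [h2 k hk]⟩
      · obtain ⟨k, hk⟩ := h
        simp [h2 k] at hk
  · rw [dif_neg h]
    push_neg at h
    constructor
    · intro hm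
      right
      exact ⟨hm.symm, fun k => by simpa using h k⟩
    · rintro (⟨h1, _⟩ | ⟨h1, _⟩)
      · exact absurd h1 (h m)
      · exact h1.symm

lemma measurableSet_coord (i : ℕ) (b : Bool) :
    MeasurableSet {y : ℕ → Bool | y i = b} := by
  have : {y : ℕ → Bool | y i = b} = (fun y : ℕ → Bool => y i) ⁻¹' {b} := by
    ext y; simp
  rw [this]
  exact measurable_pi_apply i (measurableSet_singleton b)

lemma measurable_dec (n : ℕ) : Measurable (fun y : ℕ → Bool => decY y n) := by
  apply measurable_to_countable'
  intro m
  have : (fun y : ℕ → Bool => decY y n) ⁻¹' {m} =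
      ({y : ℕ → Bool | y (Nat.pair n m) = true} ∩ ⋂ k ∈ Set.Iio m, {y | y (Nat.pair n k) = false}) ∪
      ((if m = 0 then Set.univ else ∅) ∩ ⋂ k, {y : ℕ → Bool | y (Nat.pair n k) = false}) := by
    ext y
    simp only [Set.mem_preimage, Set.mem_singleton_iff, dec_eq_iff, Set.mem_union,
      Set.mem_inter_iff, Set.mem_iInter, Set.mem_setOf_eq, Set.mem_Iio]
    constructor
    · rintro (h | ⟨h1, h2⟩)
      · exact Or.inl h
      · right; subst h1; simp [h2]
    · rintro (h | ⟨h1, h2⟩)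
      · exact Or.inl h
      · right
        by_cases hm : m = 0
        · exact ⟨hm, h2⟩
        · simp [hm] at h1
  rw [this]
  apply MeasurableSet.union
  · exact (measurableSet_coord _ _).inter
      (MeasurableSet.biInter (Set.to_countable _) fun k _ => measurableSet_coord _ _)
  · refine MeasurableSet.inter ?_ (MeasurableSet.iInter fun k => measurableSet_coord _ _)
    split <;> simp

/-- The basic clopen set forcing `decY y n = m`. -/
def E (n m : ℕ) : Set (ℕ → Bool) :=
  {y | y (Nat.pair n m) = true ∧ ∀ k < m, y (Nat.pair n k) = false}

lemma dec_eq_of_mem_E {n m : ℕ} {y : ℕ → Bool} (hy : y ∈ E n m) : decY y n = m :=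
  (dec_eq_iff y n m).mpr (Or.inl hy)

lemma isOpen_E (n m : ℕ) : IsOpen (E n m) := by
  have : E n m = {y : ℕ → Bool | y (Nat.pair n m) = true} ∩
      ⋂ k ∈ Finset.range m, {y | y (Nat.pair n k) = false} := by
    ext y; simp [E, Finset.mem_range]
  rw [this]
  have hco : ∀ (i : ℕ) (b : Bool), IsOpen {y : ℕ → Bool | y i = b} := by
    intro i b
    have : {y : ℕ → Bool | y i = b} = (fun y : ℕ → Bool => y i) ⁻¹' {b} := by
      ext y; simp
    rw [this]
    exact (continuous_apply i).isOpen_preimage _ (isOpen_discrete _)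
  exact IsOpen.inter (hco _ _) (isOpen_biInter_finset fun k _ => hco _ _)

lemma dense_union_E (h : ℕ → ℕ) (N : ℕ) :
    Dense (⋃ n ∈ Set.Ici N, E n (h n)) := by
  rw [dense_iff_inter_open]
  intro U hU ⟨y, hy⟩
  obtain ⟨I, u, hu, hsub⟩ := isOpen_pi_iff.mp hU y hy
  set n : ℕ := N + (I.sup fun i => (Nat.unpair i).1) + 1 with hn
  have hnI : ∀ i ∈ I, (Nat.unpair i).1 ≠ n := by
    intro i hi
    have : (Nat.unpair i).1 ≤ I.sup fun i => (Nat.unpair i).1 :=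
      Finset.le_sup (f := fun i => (Nat.unpair i).1) hi
    omega
  set z : ℕ → Bool := fun i =>
    if (Nat.unpair i).1 = n then decide ((Nat.unpair i).2 = h n) else y i with hz
  refine ⟨z, ?_, ?_⟩
  · apply hsub
    intro i hi
    simp only [hz, if_neg (hnI i hi)]
    exact (hu i hi).2
  · refine Set.mem_biUnion (show n ∈ Set.Ici N by simp [hn]; omega) ?_
    constructor
    · simp [hz, Nat.unpair_pair]
    · intro k hk
      simp [hz, Nat.unpair_pair]
      omega

lemma finite_iff_ex (s : Set ℕ) : s.Finite ↔ ∃ N, ∀ n ∈ s, n ≤ N := by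
  constructor
  · intro h
    obtain ⟨N, hN⟩ := h.bddAbove
    exact ⟨N, fun n hn => hN hn⟩
  · rintro ⟨N, hN⟩
    exact (Set.finite_Iic N).subset hN

/-- `X` is an R set. -/
def RSet (X : Set (ℕ → Bool)) : Prop :=
  ∀ H : Set ((ℕ → Bool) × (ℕ → Bool)), MeasurableSet H →
    (∀ x : ℕ → Bool, IsMeagre {y | (x, y) ∈ H}) →
    (⋃ x ∈ X, {y | (x, y) ∈ H}) ≠ Set.univ

theorem RSet_implies_infinitely_equal (X : Set (ℕ → Bool)) (hX : RSet X)
    (f : (ℕ → Bool) → ℕ → ℕ) (hf : Measurable f) :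
    ∃ g : ℕ → ℕ, ∀ x ∈ X, {n : ℕ | f x n = g n}.Infinite := by
  set H : Set ((ℕ → Bool) × (ℕ → Bool)) :=
    {p | {n | f p.1 n = decY p.2 n}.Finite} with hHdef
  have hmemH : ∀ x y, (x, y) ∈ H ↔ {n | f x n = decY y n}.Finite := fun x y => Iff.rfl
  -- measurability of H
  have hmeasA : ∀ n : ℕ, MeasurableSet {p : (ℕ → Bool) × (ℕ → Bool) | f p.1 n = decY p.2 n} := by
    intro n
    have h1 : Measurable fun p : (ℕ → Bool) × (ℕ → Bool) => f p.1 n :=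
      (measurable_pi_apply n).comp (hf.comp measurable_fst)
    have h2 : Measurable fun p : (ℕ → Bool) × (ℕ → Bool) => decY p.2 n :=
      (measurable_dec n).comp measurable_snd
    exact measurableSet_eq_fun h1 h2
  have hH : MeasurableSet H := by
    have : H = ⋃ N : ℕ, ⋂ n : ℕ,
        {p : (ℕ → Bool) × (ℕ → Bool) | f p.1 n = decY p.2 n → n ≤ N} := by
      ext p
      simp only [hHdef, Set.mem_setOf_eq, Set.mem_iUnion, Set.mem_iInter, finite_iff_ex]
    rw [this]
    refine MeasurableSet.iUnion fun N => MeasurableSet.iInter fun n => ?_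
    by_cases hn : n ≤ N
    · simp only [hn, implies_true]
      exact MeasurableSet.univ.congr (by ext p; simp)
    · have : {p : (ℕ → Bool) × (ℕ → Bool) | f p.1 n = decY p.2 n → n ≤ N} =
          {p | f p.1 n = decY p.2 n}ᶜ := by
        ext p; simp [hn]
      rw [this]
      exact (hmeasA n).compl
  -- sections are meager
  have hmeager : ∀ x : ℕ → Bool, IsMeagre {y | (x, y) ∈ H} := by
    intro x
    have hres : (⋂ N : ℕ, ⋃ n ∈ Set.Ici N, E n (f x n)) ∈ residual (ℕ → Bool) := by
      rw [countable_iInter_mem]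
      intro N
      exact residual_of_dense_open
        (isOpen_biUnion fun n _ => isOpen_E n (f x n)) (dense_union_E (f x) N)
    rw [IsMeagre]
    refine Filter.mem_of_superset hres ?_
    intro y hy
    simp only [Set.mem_iInter] at hy
    simp only [Set.mem_compl_iff, Set.mem_setOf_eq, hmemH]
    rw [finite_iff_ex]
    push_neg
    intro N
    obtain ⟨n, hn, hE⟩ := Set.mem_iUnion₂.mp (hy (N + 1))
    exact ⟨n, (dec_eq_of_mem_E hE).symm, by simp at hn; omega⟩
  -- apply RSet
  have hne := hX H hH hmeager
  have : ∃ y, y ∉ ⋃ x ∈ X, {y | (x, y) ∈ H} := by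
    by_contra h
    push_neg at h
    exact hne (Set.eq_univ_of_forall h)
  obtain ⟨y, hy⟩ := this
  refine ⟨decY y, fun x hx => ?_⟩
  have : (x, y) ∉ H := fun hmem => hy (Set.mem_biUnion hx hmem)
  rw [hmemH] at this
  exact this
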